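/- Second welfare theorem for the housing problem: if the identity allocation is Pareto efficient (for every permutation σ, c i (σ i) ≤ c i i for all i implies c i (σ i) = c i i for all i), then there exists a price system π : Fin n → ℝ such that c i j < c i i implies π j > π i, and c i j ≤ c i i implies π j ≥ π i. -/

import Mathlib

/-- From reflexive-transitive closure, extract an injectively-indexed path. -/
lemma exists_inj_path {α : Type*} {r : α → α → Prop} {a b : α}
    (h : Relation.ReflTransGen r a b) :
    ∃ (m : ℕ) (f : ℕ → α), f 0 = a ∧ f m = b ∧ (∀ k, k < m → r (f k) (f (k + 1))) ∧
      ∀ p q, p ≤ m → q ≤ m → f p = f q → p = q := by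
  classical
  have hP : ∃ m : ℕ, ∃ f : ℕ → α, f 0 = a ∧ f m = b ∧ ∀ k, k < m → r (f k) (f (k + 1)) := by
    induction h with
    | refl => exact ⟨0, fun _ => a, rfl, rfl, fun k hk => absurd hk (Nat.not_lt_zero k)⟩
    | @tail b' c' _hab hbc ih =>
      obtain ⟨m, f, h0, hm, he⟩ := ih
      refine ⟨m + 1, fun k => if k ≤ m then f k else c', ?_, ?_, ?_⟩
      · simp [h0]
      · simp
      intro k hk
      rcases lt_or_eq_of_le (Nat.lt_succ_iff.mp hk) with hk' | hk'
      · simp only [if_pos (Nat.le_of_lt hk'), if_pos (Nat.succ_le_of_lt hk')]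
        exact he k hk'
      · subst hk'
        simp only [le_refl, if_pos, if_neg (by omega : ¬ k + 1 ≤ k)]
        rw [hm]; exact hbc
  let m₀ := Nat.find hP
  obtain ⟨f, h0, hm, he⟩ := Nat.find_spec hP
  refine ⟨m₀, f, h0, hm, he, ?_⟩
  by_contra hcon
  push_neg at hcon
  obtain ⟨p, q, hp, hq, hval, hne⟩ := hcon
  -- wlog p < q
  obtain ⟨p, q, hp, hq, hval, hlt⟩ :
      ∃ p q, p ≤ m₀ ∧ q ≤ m₀ ∧ f p = f q ∧ p < q := by
    rcases Nat.lt_or_ge p q with h' | h'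
    · exact ⟨p, q, hp, hq, hval, h'⟩
    · exact ⟨q, p, hq, hp, hval.symm, lt_of_le_of_ne h' (fun h'' => hne h''.symm)⟩
  set d := q - p with hd
  have hd1 : 1 ≤ d := by omega
  have hdm : d ≤ m₀ := by omega
  have hqd : q = p + d := by omega
  set m' := m₀ - d with hm'
  have hmm : m₀ = m' + d := by omega
  have : ∃ g : ℕ → α, g 0 = a ∧ g m' = b ∧ ∀ k, k < m' → r (g k) (g (k + 1)) := by
    refine ⟨fun k => if k ≤ p then f k else f (k + d), ?_, ?_, ?_⟩
    · simp [h0]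
    · by_cases hc : m' ≤ p
      · have hmp : m' = p := by omega
        have hqm : q = m₀ := by omega
        show (if m' ≤ p then f m' else f (m' + d)) = b
        rw [if_pos hc, hmp, hval, hqm]
        exact hm
      · simp only [if_neg hc]
        have : m' + d = m₀ := by omega
        rw [this, hm]
    · intro k hk
      rcases Nat.lt_or_ge k p with hc | hc
      · simp only [Nat.le_of_lt hc, if_pos, Nat.succ_le_of_lt hc, if_pos]
        exact he k (by omega)
      rcases Nat.eq_or_lt_of_le hc with heq | hc'
      · subst heq
        simp only [le_refl, if_pos, if_neg (by omega : ¬ p + 1 ≤ p)]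
        rw [hval, hqd]
        have h1 : p + d < m₀ := by omega
        have h2 := he (p + d) h1
        have h3 : p + 1 + d = p + d + 1 := by omega
        rw [h3]
        exact h2
      · simp only [if_neg (by omega : ¬ k ≤ p), if_neg (by omega : ¬ k + 1 ≤ p)]
        have h2 := he (k + d) (by omega)
        have h3 : k + 1 + d = k + d + 1 := by omega
        rw [h3]
        exact h2
  have hlt' : m' < m₀ := by omega
  exact Nat.find_min hP hlt' this

/-- Key lemma: Pareto efficiency forbids a weak-improvement cycle containing a strict edge. -/
lemma key_no_cycle {n : ℕ} (c : Fin n → Fin n → ℝ)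
    (hPareto : ∀ σ : Equiv.Perm (Fin n),
      (∀ i, c i (σ i) ≤ c i i) → ∀ i, c i (σ i) = c i i)
    {i j : Fin n} (hij : c i j < c i i)
    (hcyc : Relation.ReflTransGen (fun a b => c a b ≤ c a a) j i) : False := by
  classical
  obtain ⟨m, f, h0, hm, he, hinj⟩ := exists_inj_path hcyc
  set L : List (Fin n) := (List.range (m + 1)).map f with hL
  have hlen : L.length = m + 1 := by simp [hL]
  have hget : ∀ (t : ℕ) (ht : t < L.length), L[t] = f t := by
    intro t ht
    simp [hL]
  have hnodup : L.Nodup := by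
    refine List.Nodup.map_on ?_ List.nodup_range
    intro x hx y hy hxy
    rw [List.mem_range] at hx hy
    exact hinj x y (by omega) (by omega) hxy
  set σ := L.formPerm with hσ
  have hkey : ∀ k, c k (σ k) ≤ c k k := by
    intro k
    by_cases hk : k ∈ L
    · obtain ⟨t, ht, rfl⟩ := List.mem_iff_getElem.mp hk
      rw [hσ, List.formPerm_apply_getElem L hnodup t ht]
      rcases Nat.lt_or_ge t m with hc | hc
      · have h1 : (t + 1) % L.length = t + 1 := by
          rw [hlen]; exact Nat.mod_eq_of_lt (by omega)
        simp only [h1]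
        rw [hget t ht, hget (t + 1) (by omega)]
        exact he t hc
      · have htm : t = m := by have := ht; rw [hlen] at this; omega
        subst htm
        have h1 : (t + 1) % L.length = 0 := by rw [hlen]; simp
        simp only [h1]
        rw [hget t ht, hget 0 (by omega), h0, hm]
        exact le_of_lt hij
    · rw [hσ, List.formPerm_apply_of_notMem hk]
  have hall := hPareto σ hkey
  have him : i = L[m]'(by omega) := by rw [hget m (by omega), hm]
  have hσi : σ i = j := by
    rw [him, hσ, List.formPerm_apply_getElem L hnodup m (by omega)]
    have h1 : (m + 1) % L.length = 0 := by rw [hlen]; simp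
    simp only [h1]
    rw [hget 0 (by omega), h0]
  have := hall i
  rw [hσi] at this
  exact absurd this (ne_of_lt hij)

/-- second welfare theorem for the housing problem. -/
theorem stmt_9 {n : ℕ} (c : Fin n → Fin n → ℝ)
    (hPareto : ∀ σ : Equiv.Perm (Fin n),
      (∀ i, c i (σ i) ≤ c i i) → ∀ i, c i (σ i) = c i i) :
    ∃ π : Fin n → ℝ,
      (∀ i j, c i j < c i i → π i < π j) ∧
      (∀ i j, c i j ≤ c i i → π i ≤ π j) := by
  classical
  set R : Fin n → Fin n → Prop := fun a b => c a b ≤ c a a with hR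
  set pred : Fin n → Finset (Fin n) :=
    fun i => Finset.univ.filter (fun k => Relation.ReflTransGen R k i) with hpred
  refine ⟨fun i => ((pred i).card : ℝ), ?_, ?_⟩
  · intro i j hij
    have hsub : pred i ⊆ pred j := by
      intro k hk
      rw [hpred, Finset.mem_filter] at hk ⊢
      exact ⟨Finset.mem_univ k, hk.2.tail (le_of_lt hij)⟩
    have hjj : j ∈ pred j := by
      rw [hpred, Finset.mem_filter]
      exact ⟨Finset.mem_univ j, Relation.ReflTransGen.refl⟩
    have hji : j ∉ pred i := by
      rw [hpred, Finset.mem_filter]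
      rintro ⟨-, hcyc⟩
      exact key_no_cycle c hPareto hij hcyc
    have : pred i ⊂ pred j := (Finset.ssubset_iff_of_subset hsub).mpr ⟨j, hjj, hji⟩
    show ((pred i).card : ℝ) < ((pred j).card : ℝ)
    exact_mod_cast Finset.card_lt_card this
  · intro i j hij
    have hsub : pred i ⊆ pred j := by
      intro k hk
      rw [hpred, Finset.mem_filter] at hk ⊢
      exact ⟨Finset.mem_univ k, hk.2.tail hij⟩
    show ((pred i).card : ℝ) ≤ ((pred j).card : ℝ)
    exact_mod_cast Finset.card_le_card hsub
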